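/- Let T > 0 and let r, Y, τ : ℝ → ℝ³ be continuously differentiable, T-periodic maps satisfying τ′(t) = Y(t) × r′(t) for all t ∈ ℝ. Then for every pair of constant vectors a, b ∈ ℝ³ one has ∫₀^T Y′(t)·(a × r(t) + b) dt = 0. -/

import Mathlib

open Matrix

lemma comp_hasDerivAt {f : ℝ → Fin 3 → ℝ} {f' : Fin 3 → ℝ} {t : ℝ}
    (hf : HasDerivAt f f' t) (i : Fin 3) :
    HasDerivAt (fun s => f s i) (f' i) t :=
  (ContinuousLinearMap.proj (R := ℝ) (φ := fun _ : Fin 3 => ℝ) i).hasFDerivAt.comp_hasDerivAt t hf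

lemma dot_hasDerivAt {f g : ℝ → Fin 3 → ℝ} {f' g' : Fin 3 → ℝ} {t : ℝ}
    (hf : HasDerivAt f f' t) (hg : HasDerivAt g g' t) :
    HasDerivAt (fun s => f s ⬝ᵥ g s) (f' ⬝ᵥ g t + f t ⬝ᵥ g') t := by
  simp only [dotProduct]
  rw [← Finset.sum_add_distrib]
  exact HasDerivAt.fun_sum fun i _ => ((comp_hasDerivAt hf i).mul (comp_hasDerivAt hg i))

theorem stmt_12 (T : ℝ) (hT : 0 < T) (r Y τ : ℝ → Fin 3 → ℝ)
    (hr : ContDiff ℝ 1 r) (hY : ContDiff ℝ 1 Y) (hτ : ContDiff ℝ 1 τ)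
    (hrper : Function.Periodic r T) (hYper : Function.Periodic Y T)
    (hτper : Function.Periodic τ T)
    (hrot : ∀ t : ℝ, deriv τ t = crossProduct (Y t) (deriv r t)) :
    ∀ a b : Fin 3 → ℝ,
      (∫ t in (0 : ℝ)..T, deriv Y t ⬝ᵥ (crossProduct a (r t) + b)) = 0 := by
  intro a b
  have hYd : ∀ t, HasDerivAt Y (deriv Y t) t :=
    fun t => (hY.differentiable one_ne_zero t).hasDerivAt
  have hrd : ∀ t, HasDerivAt r (deriv r t) t :=
    fun t => (hr.differentiable one_ne_zero t).hasDerivAt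
  have hτd : ∀ t, HasDerivAt τ (deriv τ t) t :=
    fun t => (hτ.differentiable one_ne_zero t).hasDerivAt
  set L : (Fin 3 → ℝ) →L[ℝ] (Fin 3 → ℝ) := LinearMap.toContinuousLinearMap (crossProduct a)
  set G : ℝ → ℝ := fun t => Y t ⬝ᵥ (crossProduct a (r t) + b) + τ t ⬝ᵥ a with hG
  have hGd : ∀ t, HasDerivAt G (deriv Y t ⬝ᵥ (crossProduct a (r t) + b)) t := by
    intro t
    have h1 : HasDerivAt (fun s => crossProduct a (r s) + b)
        (crossProduct a (deriv r t)) t := by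
      have := (L.hasFDerivAt.comp_hasDerivAt t (hrd t)).add_const b
      simpa [L] using this
    have h2 := dot_hasDerivAt (hYd t) h1
    have h3 := dot_hasDerivAt (hτd t) (hasDerivAt_const t a)
    have h4 := h2.add h3
    refine h4.congr_deriv ?_
    rw [hrot t]
    simp [dotProduct, cross_apply, Fin.sum_univ_three]
    ring
  have hcont : Continuous fun t => deriv Y t ⬝ᵥ (crossProduct a (r t) + b) := by
    have hY' : Continuous (deriv Y) := hY.continuous_deriv le_rfl
    have hc2 : Continuous fun t => crossProduct a (r t) + b :=
      (L.continuous.comp hr.continuous).add continuous_const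
    simp only [dotProduct]
    exact continuous_finset_sum _ fun i _ =>
      ((continuous_apply i).comp hY').mul ((continuous_apply i).comp hc2)
  have hint := intervalIntegral.integral_eq_sub_of_hasDerivAt
    (f := G) (a := 0) (b := T) (fun t _ => hGd t) (hcont.intervalIntegrable 0 T)
  rw [hint]
  have : G T = G 0 := by
    have h1 := hYper 0
    have h2 := hrper 0
    have h3 := hτper 0
    simp only [zero_add] at h1 h2 h3
    simp [hG, h1, h2, h3]
  rw [this, sub_self]
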